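/- Let c ∈ ℂ with −π ≤ Im c < π and f(z) = e^z + c. There exists C₀ > 0 (depending only on c) such that for every w ∈ ℂ with Re w ≥ C₀, |Im f(w)| < π, and Re f(w) > Re c, one has Re f(w) ≥ Re c + e^{Re w}/2 and Re c + e^{Re w}/2 ≥ (Re w)². -/

import Mathlib

open Real

/-- For `f(z) = e^z + c` with `-π ≤ Im c < π`, there is `C₀ > 0` such that
any point `w` with `Re w ≥ C₀` whose image lies in the strip `|Im f(w)| < π` and has
`Re f(w) > Re c` satisfies `Re f(w) ≥ Re c + e^{Re w}/2 ≥ (Re w)²`. -/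
theorem stmt_10
    (c : ℂ) (hc1 : -Real.pi ≤ c.im) (hc2 : c.im < Real.pi)
    (f : ℂ → ℂ) (hf : f = fun z => Complex.exp z + c) :
    ∃ C₀ : ℝ, 0 < C₀ ∧ ∀ w : ℂ, C₀ ≤ w.re → |(f w).im| < Real.pi → c.re < (f w).re →
      c.re + Real.exp w.re / 2 ≤ (f w).re ∧ w.re ^ 2 ≤ c.re + Real.exp w.re / 2 := by
  subst hf
  have hpi : 0 < Real.pi := Real.pi_pos
  have hlog : 0 < Real.log (4 * Real.pi) := by
    apply Real.log_pos; nlinarith [Real.pi_gt_three]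
  refine ⟨2 * |c.re| + 55 + Real.log (4 * Real.pi), by positivity, ?_⟩
  intro w hw hIm hRe
  set x := w.re with hxdef
  set y := w.im with hydef
  have hre : ((fun z => Complex.exp z + c) w).re = Real.exp x * Real.cos y + c.re := by
    simp [Complex.add_re, Complex.exp_re, hxdef, hydef]
  have him : ((fun z => Complex.exp z + c) w).im = Real.exp x * Real.sin y + c.im := by
    simp [Complex.add_im, Complex.exp_im, hxdef, hydef]
  rw [hre] at hRe ⊢
  rw [him] at hIm
  have hx0 : (0:ℝ) ≤ x := by
    have := abs_nonneg c.re; linarith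
  have hexp4pi : 4 * Real.pi ≤ Real.exp x := by
    have h1 : Real.log (4 * Real.pi) ≤ x := by
      have := abs_nonneg c.re; linarith
    calc 4 * Real.pi = Real.exp (Real.log (4 * Real.pi)) := by
          rw [Real.exp_log (by positivity)]
      _ ≤ Real.exp x := Real.exp_le_exp.mpr h1
  have hexppos : 0 < Real.exp x := Real.exp_pos x
  have hcos : 0 < Real.cos y := by
    nlinarith [Real.cos_le_one y]
  have hcim : |c.im| ≤ Real.pi := by
    rw [abs_le]; constructor <;> linarith
  have hsin2 : Real.exp x * |Real.sin y| < 2 * Real.pi := by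
    have h1 : |Real.exp x * Real.sin y| ≤ |Real.exp x * Real.sin y + c.im| + |c.im| := by
      have h := abs_add_le (Real.exp x * Real.sin y + c.im) (-c.im)
      simp only [add_neg_cancel_right, abs_neg] at h
      exact h
    rw [abs_mul, abs_of_pos hexppos] at h1
    linarith
  have hsinlt : |Real.sin y| < 1/2 := by
    nlinarith [abs_nonneg (Real.sin y)]
  have hcoshalf : 1/2 ≤ Real.cos y := by
    have hpyth := Real.sin_sq_add_cos_sq y
    have hsq : Real.sin y ^ 2 < 1/4 := by
      nlinarith [sq_abs (Real.sin y), abs_nonneg (Real.sin y)]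
    nlinarith [Real.cos_le_one y]
  constructor
  · nlinarith
  · have hcube : x ^ 3 / 27 ≤ Real.exp x := by
      have h1 : x / 3 + 1 ≤ Real.exp (x / 3) := by
        linarith [Real.add_one_le_exp (x / 3)]
      have h2 : (x / 3) ^ 3 ≤ Real.exp (x / 3) ^ 3 := by
        apply pow_le_pow_left₀ (by linarith) (by linarith) 3
      have h3 : Real.exp (x / 3) ^ 3 = Real.exp x := by
        rw [← Real.exp_nat_mul]; push_cast; ring_nf
      calc x ^ 3 / 27 = (x / 3) ^ 3 := by ring
        _ ≤ Real.exp (x / 3) ^ 3 := h2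
        _ = Real.exp x := h3
    have hx55 : 55 + 2 * |c.re| ≤ x := by linarith
    have hca := neg_abs_le c.re
    have hcn := abs_nonneg c.re
    nlinarith [sq_nonneg x, sq_nonneg (x - 54), mul_nonneg (mul_nonneg hx0 hx0) hcn,
      mul_nonneg hx0 hcn]
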